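/- Let C be a small Z₊-category in which every full subcategory with one object is Z₊-isomorphic to [0]_cyc and every full subcategory with two objects is Z₊-isomorphic to [1]_cyc. Then C is Z₊-isomorphic to A_cyc for some linearly ordered set A. (Drinfeld's Proposition: (iii) ⟹ (i).) -/

import Mathlib

/-!
Z₊-categories (Drinfeld, "On the notion of geometric realization", §2):
a Z₊-category is a category `C` together with a morphism of monoids
`Z₊ → End(id_C)`, i.e. a compatible family of endomorphisms `1_c`.
-/

open CategoryTheory

universe v u

/-- A Z₊-category: a category with a natural endomorphism `1` of the identity
functor (equivalently, a morphism of monoids `Z₊ → End (id_C)`). -/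
class ZPlus (C : Type u) [Category.{v} C] where
  one : ∀ c : C, c ⟶ c
  one_natural : ∀ {c d : C} (f : c ⟶ d), one c ≫ f = f ≫ one d

/-- `(1_c)ⁿ`. -/
def ZPlus.onePow {C : Type u} [Category.{v} C] [ZPlus C] (c : C) : ℕ → (c ⟶ c)
  | 0 => 𝟙 c
  | n + 1 => ZPlus.onePow c n ≫ ZPlus.one c

/-- A Z₊-functor: a functor preserving the distinguished endomorphisms. -/
def IsZFunctor {C : Type*} {D : Type*} [Category C] [Category D] [ZPlus C] [ZPlus D]
    (G : C ⥤ D) : Prop :=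
  ∀ c : C, G.map (ZPlus.one c) = ZPlus.one (G.obj c)

/-- An isomorphism of categories: a functor with a strict two-sided inverse. -/
def IsCatIso {C : Type*} {D : Type*} [Category C] [Category D] (G : C ⥤ D) : Prop :=
  ∃ G' : D ⥤ C, G ⋙ G' = 𝟭 C ∧ G' ⋙ G = 𝟭 D

/-- A Z₊-isomorphism: a Z₊-functor which is an isomorphism of categories. -/
def IsZIso {C : Type*} {D : Type*} [Category C] [Category D] [ZPlus C] [ZPlus D]
    (G : C ⥤ D) : Prop :=
  IsZFunctor G ∧ IsCatIso G

/-- A full subcategory of a Z₊-category is a Z₊-category. -/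
instance {C : Type u} [Category.{v} C] [ZPlus C] (Z : C → Prop) :
    ZPlus (ObjectProperty.FullSubcategory Z) where
  one c := ⟨(ZPlus.one c.obj : c.obj ⟶ c.obj)⟩
  one_natural {c d} f := by ext; exact ZPlus.one_natural (C := C) (f.hom : c.obj ⟶ d.obj)

/-- `[0]_cyc`: the Z₊-category with one object whose endomorphism monoid is
`(Z₊, +)`, with `1` the generator. -/
def ZeroCyc : Type := SingleObj (Multiplicative ℕ)

instance : Category ZeroCyc := inferInstanceAs (Category (SingleObj (Multiplicative ℕ)))

instance : ZPlus ZeroCyc where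
  one _ := (Multiplicative.ofAdd 1 : Multiplicative ℕ)
  one_natural {c d} f :=
    mul_comm (G := Multiplicative ℕ) f (Multiplicative.ofAdd 1)

/-- `[1]_cyc`: the Z₊-category with two objects `0`, `1`, in which each hom-set
is a free Z₊-torsor; the morphism `n : x ⟶ y` represents `a·1ⁿ` (resp. `b·1ⁿ`,
`1ⁿ`), where `a : 0 → 1` and `b : 1 → 0` are the generators, with `b∘a = 1₀`
and `a∘b = 1₁`. -/
def OneCyc : Type := Bool

instance : DecidableEq OneCyc := instDecidableEqBool

/-- Composition in `[1]_cyc`: torsor indices add, with a carry when both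
morphisms change the object (since `b∘a = 1₀` and `a∘b = 1₁`). -/
def ocomp (x y z : OneCyc) (n m : ℕ) : ℕ :=
  n + m + (if x ≠ y ∧ y ≠ z then 1 else 0)

instance : Category OneCyc where
  Hom _ _ := ℕ
  id _ := (0 : ℕ)
  comp {x y z} n m := ocomp x y z n m
  id_comp {x y} f := by simp [ocomp]
  comp_id {x y} f := by simp [ocomp]
  assoc {a b c d} f g h := by
    show ocomp a c d (ocomp a b c f g) h = ocomp a b d f (ocomp b c d g h)
    cases a <;> cases b <;> cases c <;> cases d <;> simp [ocomp, OneCyc] <;> omega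

instance : ZPlus OneCyc where
  one _ := (1 : ℕ)
  one_natural {c d} f := by
    show ocomp c c d 1 f = ocomp c d d f 1
    cases c <;> cases d <;> simp [ocomp, OneCyc] <;> omega

/-- Hypothesis: every full subcategory of `C` with one object is Z₊-isomorphic
to `[0]_cyc`. -/
def OneObjHyp (C : Type u) [Category.{v} C] [ZPlus C] : Prop :=
  ∀ x : C, ∃ Φ : ObjectProperty.FullSubcategory (fun c : C => c = x) ⥤ ZeroCyc, IsZIso Φ

/-- Hypothesis: every full subcategory of `C` with two objects is Z₊-isomorphic
to `[1]_cyc`. -/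
def TwoObjHyp (C : Type u) [Category.{v} C] [ZPlus C] : Prop :=
  ∀ x y : C, x ≠ y →
    ∃ Φ : ObjectProperty.FullSubcategory (fun c : C => c = x ∨ c = y) ⥤ OneCyc, IsZIso Φ
/-!
The Z₊-category `A_cyc` associated with a small category `A` (Drinfeld §2,
Example 4): it has the same objects as `A` and is generated by the morphisms
of `A` together with generators `f* : c₂ ⟶ c₁` for each `f : c₁ ⟶ c₂` of `A`,
subject to the relations `(g∘f)*∘g = f*` and `f∘(g∘f)* = g*`; its
Z₊-structure is `1_c := (id_c)*`.
-/

/-- The quiver with the objects of `A`, whose arrows `a ⟶ b` are the morphisms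
`a ⟶ b` of `A` together with a formal arrow `f*` for each morphism `f : b ⟶ a`
of `A`. -/
def CycQuiver (A : Type u) [Category.{v} A] : Type u := A

instance CycQuiver.quiver (A : Type u) [Category.{v} A] : Quiver (CycQuiver A) :=
  ⟨fun a b => ((show A from a) ⟶ (show A from b)) ⊕ ((show A from b) ⟶ (show A from a))⟩

/-- The defining relations of `A_cyc`: the morphisms of `A` compose as in `A`
(including identities), and `(g∘f)*∘g = f*`, `f∘(g∘f)* = g*`.
(In Lean's diagrammatic order: `g ≫ (f ≫ g)* = f*` and `(f ≫ g)* ≫ f = g*`.) -/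
inductive cycRel (A : Type u) [Category.{v} A] :
    HomRel (Paths (CycQuiver A))
  | id (a : A) :
      cycRel A (Quiver.Hom.toPath (Sum.inl (𝟙 a))) (𝟙 (show Paths (CycQuiver A) from a))
  | comp {a b c : A} (f : a ⟶ b) (g : b ⟶ c) :
      cycRel A (Quiver.Hom.toPath (Sum.inl f) ≫ Quiver.Hom.toPath (Sum.inl g))
        (Quiver.Hom.toPath (Sum.inl (f ≫ g)))
  | star1 {a b c : A} (f : a ⟶ b) (g : b ⟶ c) :
      cycRel A (Quiver.Hom.toPath (Sum.inl g) ≫ Quiver.Hom.toPath (Sum.inr (f ≫ g)))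
        (Quiver.Hom.toPath (Sum.inr f))
  | star2 {a b c : A} (f : a ⟶ b) (g : b ⟶ c) :
      cycRel A (Quiver.Hom.toPath (Sum.inr (f ≫ g)) ≫ Quiver.Hom.toPath (Sum.inl f))
        (Quiver.Hom.toPath (Sum.inr g))

/-- `A_cyc`: the category generated by `A` and the formal generators `f*`
modulo the relations above. -/
def ACyc (A : Type u) [Category.{v} A] : Type u := CategoryTheory.Quotient (cycRel A)

instance (A : Type u) [Category.{v} A] : Category (ACyc A) :=
  inferInstanceAs (Category (CategoryTheory.Quotient (cycRel A)))

/-- The object of `A_cyc` corresponding to an object of `A`. -/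
def ACyc.obj {A : Type u} [Category.{v} A] (a : A) : ACyc A := ⟨a⟩

/-- The morphism of `A_cyc` coming from a morphism `f` of `A`. -/
def ACyc.ofHom {A : Type u} [Category.{v} A] {a b : A} (f : a ⟶ b) :
    ACyc.obj a ⟶ ACyc.obj b :=
  (CategoryTheory.Quotient.functor (cycRel A)).map (Quiver.Hom.toPath (Sum.inl f))

/-- The formal generator `f* : c₂ ⟶ c₁` associated with `f : c₁ ⟶ c₂`. -/
def ACyc.star {A : Type u} [Category.{v} A] {a b : A} (f : a ⟶ b) :
    ACyc.obj b ⟶ ACyc.obj a :=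
  (CategoryTheory.Quotient.functor (cycRel A)).map (Quiver.Hom.toPath (Sum.inr f))

/-- `1_c := (id_c)*`. -/
def ACyc.one {A : Type u} [Category.{v} A] (a : A) : ACyc.obj a ⟶ ACyc.obj a :=
  ACyc.star (𝟙 a)

section ACycLemmas

variable {A : Type u} [Category.{v} A]

theorem ACyc.star1_eq {a b c : A} (f : a ⟶ b) (g : b ⟶ c) :
    ACyc.ofHom g ≫ ACyc.star (f ≫ g) = ACyc.star f := by
  rw [ACyc.ofHom, ACyc.star, ACyc.star]
  exact (Functor.map_comp _ _ _).symm.trans (CategoryTheory.Quotient.sound _ (cycRel.star1 f g))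

theorem ACyc.star2_eq {a b c : A} (f : a ⟶ b) (g : b ⟶ c) :
    ACyc.star (f ≫ g) ≫ ACyc.ofHom f = ACyc.star g := by
  rw [ACyc.ofHom, ACyc.star, ACyc.star]
  exact (Functor.map_comp _ _ _).symm.trans (CategoryTheory.Quotient.sound _ (cycRel.star2 f g))

theorem ACyc.comp_star_self {a b : A} (f : a ⟶ b) :
    ACyc.ofHom f ≫ ACyc.star f = ACyc.one a := by
  simpa [ACyc.one] using ACyc.star1_eq (𝟙 a) f

theorem ACyc.star_comp_self {a b : A} (f : a ⟶ b) :
    ACyc.star f ≫ ACyc.ofHom f = ACyc.one b := by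
  simpa [ACyc.one] using ACyc.star2_eq f (𝟙 b)

theorem ACyc.one_natural_ofHom {a b : A} (f : a ⟶ b) :
    ACyc.one a ≫ ACyc.ofHom f = ACyc.ofHom f ≫ ACyc.one b := by
  rw [← ACyc.comp_star_self f, Category.assoc, ACyc.star_comp_self f]

theorem ACyc.one_natural_star {a b : A} (f : a ⟶ b) :
    ACyc.one b ≫ ACyc.star f = ACyc.star f ≫ ACyc.one a := by
  rw [← ACyc.star_comp_self f, Category.assoc, ACyc.comp_star_self f]

theorem ACyc.one_natural_gen {a b : CycQuiver A} (e : a ⟶ b) :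
    ACyc.one (show A from a) ≫ (CategoryTheory.Quotient.functor (cycRel A)).map
        (Quiver.Hom.toPath e) =
      (CategoryTheory.Quotient.functor (cycRel A)).map (Quiver.Hom.toPath e) ≫
        ACyc.one (show A from b) := by
  match e with
  | Sum.inl f => exact ACyc.one_natural_ofHom f
  | Sum.inr f => exact ACyc.one_natural_star f

theorem ACyc.one_natural_aux :
    ∀ {a b : Paths (CycQuiver A)} (p : a ⟶ b),
      ACyc.one (show A from a) ≫ (CategoryTheory.Quotient.functor (cycRel A)).map p =
        (CategoryTheory.Quotient.functor (cycRel A)).map p ≫ ACyc.one (show A from b) := by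
  intro a b p
  induction p using Quiver.Path.rec with
  | nil =>
    show ACyc.one (show A from a) ≫ (CategoryTheory.Quotient.functor (cycRel A)).map (𝟙 a) =
      (CategoryTheory.Quotient.functor (cycRel A)).map (𝟙 a) ≫ ACyc.one (show A from a)
    rw [CategoryTheory.Functor.map_id]
    exact Category.comp_id _
  | cons p e ih =>
    rename_i b c
    show ACyc.one (show A from a) ≫ (CategoryTheory.Quotient.functor (cycRel A)).map
        (p ≫ Quiver.Hom.toPath (V := CycQuiver A) e) =
      (CategoryTheory.Quotient.functor (cycRel A)).map
        (p ≫ Quiver.Hom.toPath (V := CycQuiver A) e) ≫ ACyc.one (show A from c)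
    erw [CategoryTheory.Functor.map_comp, ← Category.assoc, ih, Category.assoc,
      ACyc.one_natural_gen e, Category.assoc]
    rfl

theorem ACyc.one_natural {x y : A} (f : ACyc.obj x ⟶ ACyc.obj y) :
    ACyc.one x ≫ f = f ≫ ACyc.one y := by
  refine Quot.inductionOn f fun p => ?_
  exact ACyc.one_natural_aux p

end ACycLemmas


/-- `A_cyc` is a Z₊-category with `1_c := (id_c)*`. -/
instance ACyc.zplus (A : Type u) [Category.{v} A] : ZPlus (ACyc A) where
  one c := ACyc.one (show A from c.as)
  one_natural {c d} f :=
    ACyc.one_natural (x := show A from c.as) (y := show A from d.as) f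
/-! ### General Z₊ lemmas -/

namespace ZPlus

variable {C : Type u} [Category.{v} C] [ZPlus C]

theorem onePow_succ (c : C) (n : ℕ) :
    onePow c (n + 1) = onePow c n ≫ one c := rfl

theorem onePow_natural {c d : C} (f : c ⟶ d) (n : ℕ) :
    onePow c n ≫ f = f ≫ onePow d n := by
  induction n with
  | zero => simp [onePow]
  | succ n ih =>
    rw [onePow_succ, onePow_succ, Category.assoc, one_natural, ← Category.assoc, ih,
      Category.assoc]

theorem onePow_add (c : C) (n m : ℕ) :
    onePow c (n + m) = onePow c n ≫ onePow c m := by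
  induction m with
  | zero => simp [onePow]
  | succ m ih => rw [← Nat.add_assoc, onePow_succ, onePow_succ, ih, Category.assoc]

end ZPlus

theorem IsZFunctor.map_onePow {C : Type*} {D : Type*} [Category C] [Category D]
    [ZPlus C] [ZPlus D] {G : C ⥤ D} (hG : IsZFunctor G) (c : C) (n : ℕ) :
    G.map (ZPlus.onePow c n) = ZPlus.onePow (G.obj c) n := by
  induction n with
  | zero => simp [ZPlus.onePow]
  | succ n ih => rw [ZPlus.onePow_succ, ZPlus.onePow_succ, G.map_comp, ih, hG]

theorem IsCatIso.map_bijective {C : Type*} {D : Type*} [Category C] [Category D]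
    {G : C ⥤ D} (h : IsCatIso G) (a b : C) :
    Function.Bijective (G.map : (a ⟶ b) → (G.obj a ⟶ G.obj b)) := by
  obtain ⟨G', h1, h2⟩ := h
  constructor
  · intro f g hfg
    have hf := Functor.congr_hom h1 f
    have hg := Functor.congr_hom h1 g
    simp only [Functor.comp_map, Functor.id_map] at hf hg
    calc f = eqToHom (Functor.congr_obj h1 a).symm ≫ G'.map (G.map f) ≫
          eqToHom (Functor.congr_obj h1 b) := by rw [hf]; simp
      _ = eqToHom (Functor.congr_obj h1 a).symm ≫ G'.map (G.map g) ≫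
          eqToHom (Functor.congr_obj h1 b) := by rw [hfg]
      _ = g := by rw [hg]; simp
  · intro g
    refine ⟨eqToHom (Functor.congr_obj h1 a).symm ≫ G'.map g ≫
      eqToHom (Functor.congr_obj h1 b), ?_⟩
    have h2g := Functor.congr_hom h2 g
    simp only [Functor.comp_map, Functor.id_map] at h2g
    simp [eqToHom_map, h2g]

theorem IsZIso.comp {C D E : Type*} [Category C] [Category D] [Category E]
    [ZPlus C] [ZPlus D] [ZPlus E] {F : C ⥤ D} {G : D ⥤ E}
    (hF : IsZIso F) (hG : IsZIso G) : IsZIso (F ⋙ G) := by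
  obtain ⟨hFz, F', hF1, hF2⟩ := hF
  obtain ⟨hGz, G', hG1, hG2⟩ := hG
  refine ⟨fun c => ?_, G' ⋙ F', ?_, ?_⟩
  · show G.map (F.map (ZPlus.one c)) = _
    rw [hFz, hGz]
    rfl
  · show F ⋙ ((G ⋙ G') ⋙ F') = 𝟭 C
    rw [hG1]
    exact hF1
  · show G' ⋙ ((F' ⋙ F) ⋙ G) = 𝟭 E
    rw [hF2]
    exact hG2

/-! ### The normal-form category `NCat A` of a linear order -/

/-- `[u < v]` as a natural number. -/
def bcnt {A : Type u} [LinearOrder A] (u v : A) : ℕ := if u < v then 1 else 0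

theorem bcnt_triangle {A : Type u} [LinearOrder A] (x y z : A) :
    bcnt z x ≤ bcnt y x + bcnt z y := by
  rcases lt_or_ge z x with h1 | h1
  · rcases lt_or_ge z y with h2 | h2
    · simp [bcnt, h1, h2]
    · have h3 : y < x := lt_of_le_of_lt h2 h1
      simp [bcnt, h1, h3]
  · simp [bcnt, not_lt.2 h1]

/-- The carry appearing when composing normal forms `x → y → z`. -/
def ncarry {A : Type u} [LinearOrder A] (x y z : A) : ℕ :=
  bcnt y x + bcnt z y - bcnt z x

theorem bcnt_self {A : Type u} [LinearOrder A] (x : A) : bcnt x x = 0 := by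
  simp [bcnt]

theorem ncarry_left {A : Type u} [LinearOrder A] (x z : A) : ncarry x x z = 0 := by
  simp [ncarry, bcnt_self]

theorem ncarry_right {A : Type u} [LinearOrder A] (x z : A) : ncarry x z z = 0 := by
  simp [ncarry, bcnt_self]

theorem ncarry_cocycle {A : Type u} [LinearOrder A] (x y z w : A) :
    ncarry x y z + ncarry x z w = ncarry y z w + ncarry x y w := by
  have h1 := bcnt_triangle x y z
  have h2 := bcnt_triangle x z w
  have h3 := bcnt_triangle y z w
  have h4 := bcnt_triangle x y w
  unfold ncarry
  omega

/-- The category with objects `A`, hom-sets `ℕ` (normal forms `g·1ⁿ`), and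
composition adding torsor indices with a carry. -/
def NCat (A : Type u) [LinearOrder A] : Type u := A

/-- The element of `A` underlying an object of `NCat A`. -/
def NCat.un {A : Type u} [LinearOrder A] (x : NCat A) : A := x

/-- Composition of normal forms. -/
def ncat_comp {A : Type u} [LinearOrder A] (x y z : A) (n m : ℕ) : ℕ :=
  n + m + ncarry x y z

theorem ncat_id_comp {A : Type u} [LinearOrder A] (x y : A) (n : ℕ) :
    ncat_comp x x y 0 n = n := by rw [ncat_comp, ncarry_left]; omega

theorem ncat_comp_id {A : Type u} [LinearOrder A] (x y : A) (n : ℕ) :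
    ncat_comp x y y n 0 = n := by rw [ncat_comp, ncarry_right]; omega

theorem ncat_assoc {A : Type u} [LinearOrder A] (x y z w : A) (a b c : ℕ) :
    ncat_comp x z w (ncat_comp x y z a b) c
      = ncat_comp x y w a (ncat_comp y z w b c) := by
  have := ncarry_cocycle x y z w
  simp only [ncat_comp]
  omega

theorem ncat_one_natural {A : Type u} [LinearOrder A] (c d : A) (n : ℕ) :
    ncat_comp c c d 1 n = ncat_comp c d d n 1 := by
  simp only [ncat_comp]
  rw [ncarry_left, ncarry_right]
  omega

instance NCat.category {A : Type u} [LinearOrder A] : Category (NCat A) where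
  Hom _ _ := ℕ
  id _ := (0 : ℕ)
  comp {x y z} n m := ncat_comp x.un y.un z.un n m
  id_comp {x y} f := ncat_id_comp x.un y.un f
  comp_id {x y} f := ncat_comp_id x.un y.un f
  assoc {x y z w} f g h := ncat_assoc x.un y.un z.un w.un f g h

instance NCat.zplus {A : Type u} [LinearOrder A] : ZPlus (NCat A) where
  one _ := (1 : ℕ)
  one_natural {c d} f := ncat_one_natural c.un d.un f

theorem NCat.onePow_eq {A : Type u} [LinearOrder A] (c : NCat A) (n : ℕ) :
    ZPlus.onePow c n = (n : ℕ) := by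
  induction n with
  | zero => rfl
  | succ n ih =>
    rw [ZPlus.onePow_succ, ih]
    show ncat_comp c.un c.un c.un n 1 = n + 1
    rw [ncat_comp, ncarry_left]

theorem ZPlus.onePow_one {C : Type u} [Category.{v} C] [ZPlus C] (c : C) :
    ZPlus.onePow c 1 = ZPlus.one c := Category.id_comp _
/-! ### Further `ACyc` lemmas -/

section ACycMore

variable {A : Type u} [Category.{v} A]

theorem ACyc.ofHom_id (a : A) : ACyc.ofHom (𝟙 a) = 𝟙 (ACyc.obj a) := by
  rw [ACyc.ofHom, CategoryTheory.Quotient.sound _ (cycRel.id a)]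
  exact (CategoryTheory.Quotient.functor (cycRel A)).map_id _

theorem ACyc.ofHom_comp {a b c : A} (f : a ⟶ b) (g : b ⟶ c) :
    ACyc.ofHom f ≫ ACyc.ofHom g = ACyc.ofHom (f ≫ g) := by
  rw [ACyc.ofHom, ACyc.ofHom, ACyc.ofHom]
  exact (Functor.map_comp _ _ _).symm.trans (CategoryTheory.Quotient.sound _ (cycRel.comp f g))

theorem ACyc.star_comp_star {a b c : A} (f : a ⟶ b) (g : b ⟶ c) :
    ACyc.star g ≫ ACyc.star f = ACyc.star (f ≫ g) ≫ ACyc.one a := by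
  rw [← ACyc.star1_eq f g, ← Category.assoc, ACyc.star_comp_self g]
  exact ACyc.one_natural_star (f ≫ g)

theorem ACyc.onePow_one (c : A) :
    ZPlus.onePow (ACyc.obj c) 1 = ACyc.one c := by
  rw [ZPlus.onePow_succ]
  show 𝟙 _ ≫ _ = _
  rw [Category.id_comp]
  rfl

end ACycMore

/-! ### The Z₊-isomorphism `ACyc A ≌ NCat A` for a linear order `A` -/

section PartOne

variable {A : Type u} [LinearOrder A]

/-- The element of `A` underlying a vertex of `CycQuiver A`. -/
def CycQuiver.toA (a : CycQuiver A) : A := a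

/-- The object of `NCat A` corresponding to an element of `A`. -/
def NCat.ofA (a : A) : NCat A := a

/-- A morphism of `NCat A` with given torsor index. -/
def NCat.hom (a b : A) (n : ℕ) : NCat.ofA a ⟶ NCat.ofA b := n

theorem bcnt_of_le {a b : A} (h : a ≤ b) : bcnt b a = 0 := if_neg (not_lt.2 h)

theorem bcnt_of_lt {a b : A} (h : b < a) : bcnt b a = 1 := if_pos h

/-- The prefunctor sending each generator of `ACyc A` to its normal form. -/
def cycPre (A : Type u) [LinearOrder A] : Prefunctor (CycQuiver A) (NCat A) where
  obj a := NCat.ofA a.toA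
  map {a b} e :=
    Sum.casesOn e (fun _ => NCat.hom a.toA b.toA 0)
      (fun _ => NCat.hom a.toA b.toA (if a.toA = b.toA then 1 else 0))

theorem star1_arith {A : Type u} [LinearOrder A] (a b c : A) (hab : a ≤ b) (hbc : b ≤ c) :
    ncat_comp b c a 0 (if c = a then 1 else 0) = (if b = a then 1 else 0) := by
  rcases eq_or_lt_of_le hab with rfl | hab'
  · rw [if_pos rfl]
    rcases eq_or_lt_of_le hbc with rfl | hbc'
    · rw [if_pos rfl]
      simp [ncat_comp, ncarry, bcnt_self]
    · rw [if_neg (ne_of_gt hbc')]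
      simp [ncat_comp, ncarry, bcnt_of_le (le_of_lt hbc'), bcnt_of_lt hbc', bcnt_self]
  · rw [if_neg (ne_of_gt hab'), if_neg (ne_of_gt (lt_of_lt_of_le hab' hbc))]
    simp [ncat_comp, ncarry, bcnt_of_le hbc, bcnt_of_lt (lt_of_lt_of_le hab' hbc),
      bcnt_of_lt hab']

theorem star2_arith {A : Type u} [LinearOrder A] (a b c : A) (hab : a ≤ b) (hbc : b ≤ c) :
    ncat_comp c a b (if c = a then 1 else 0) 0 = (if c = b then 1 else 0) := by
  rcases eq_or_lt_of_le hbc with rfl | hbc'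
  · rw [if_pos rfl]
    rcases eq_or_lt_of_le hab with rfl | hab'
    · rw [if_pos rfl]
      simp [ncat_comp, ncarry, bcnt_self]
    · rw [if_neg (ne_of_gt hab')]
      simp [ncat_comp, ncarry, bcnt_of_lt hab', bcnt_of_le (le_of_lt hab'), bcnt_self]
  · rw [if_neg (ne_of_gt hbc'), if_neg (ne_of_gt (lt_of_le_of_lt hab hbc'))]
    simp [ncat_comp, ncarry, bcnt_of_lt (lt_of_le_of_lt hab hbc'), bcnt_of_le hab,
      bcnt_of_lt hbc']

theorem cycPre_rel (A : Type u) [LinearOrder A] :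
    ∀ (a b : Paths (CycQuiver A)) (f g : a ⟶ b), cycRel A f g →
      (Paths.lift (cycPre A)).map f = (Paths.lift (cycPre A)).map g := by
  intro x y f g h
  induction h with
  | id a =>
    erw [Paths.lift_toPath, CategoryTheory.Functor.map_id]
    rfl
  | comp f g =>
    rename_i a b c
    erw [Functor.map_comp, Paths.lift_toPath, Paths.lift_toPath, Paths.lift_toPath]
    show ncat_comp a b c 0 0 = (0 : ℕ)
    have hab := leOfHom f
    have hbc := leOfHom g
    simp [ncat_comp, ncarry, bcnt_of_le hab, bcnt_of_le hbc, bcnt_of_le (hab.trans hbc)]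
  | star1 f g =>
    rename_i a b c
    erw [Functor.map_comp, Paths.lift_toPath, Paths.lift_toPath, Paths.lift_toPath]
    show ncat_comp b c a 0 (if c = a then 1 else 0) = (if b = a then 1 else 0)
    exact star1_arith a b c (leOfHom f) (leOfHom g)
  | star2 f g =>
    rename_i a b c
    erw [Functor.map_comp, Paths.lift_toPath, Paths.lift_toPath, Paths.lift_toPath]
    show ncat_comp c a b (if c = a then 1 else 0) 0 = (if c = b then 1 else 0)
    exact star2_arith a b c (leOfHom f) (leOfHom g)

/-- The normal form functor `ACyc A ⥤ NCat A`. -/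
def FA (A : Type u) [LinearOrder A] : ACyc A ⥤ NCat A :=
  CategoryTheory.Quotient.lift _ (Paths.lift (cycPre A)) (cycPre_rel A)

theorem FA_map_ofHom {a b : A} (f : a ⟶ b) :
    (FA A).map (ACyc.ofHom f) = NCat.hom a b 0 := by
  show (Paths.lift (cycPre A)).map (Quiver.Hom.toPath (Sum.inl f)) = NCat.hom a b 0
  erw [Paths.lift_toPath]
  rfl

theorem FA_map_star {a b : A} (f : a ⟶ b) :
    (FA A).map (ACyc.star f) = NCat.hom b a (if b = a then 1 else 0) := by
  show (Paths.lift (cycPre A)).map (Quiver.Hom.toPath (Sum.inr f)) = _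
  erw [Paths.lift_toPath]
  rfl

theorem FA_isZ : IsZFunctor (FA A) := by
  intro c
  show (FA A).map (ACyc.star (𝟙 _)) = _
  rw [FA_map_star]
  rw [if_pos rfl]
  rfl

/-- The generating morphism of `ACyc A` from `a` to `b`. -/
def genA (a b : A) : ACyc.obj a ⟶ ACyc.obj b :=
  if h : a ≤ b then ACyc.ofHom (homOfLE h) else ACyc.star (homOfLE (le_of_not_ge h))

theorem genA_refl (a : A) : genA a a = 𝟙 (ACyc.obj a) := by
  rw [genA, dif_pos (le_refl a), show homOfLE (le_refl a) = 𝟙 a from Subsingleton.elim _ _,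
    ACyc.ofHom_id]

theorem genA_comp (a b c : A) :
    genA a b ≫ genA b c = genA a c ≫ ZPlus.onePow (ACyc.obj c) (ncarry a b c) := by
  by_cases hab : a ≤ b <;> by_cases hbc : b ≤ c
  · have hac := hab.trans hbc
    have hn : ncarry a b c = 0 := by
      simp [ncarry, bcnt_of_le hab, bcnt_of_le hbc, bcnt_of_le hac]
    rw [hn, genA, genA, genA, dif_pos hab, dif_pos hbc, dif_pos hac, ACyc.ofHom_comp]
    show _ = _ ≫ 𝟙 _
    rw [Category.comp_id]
    exact congrArg _ (Subsingleton.elim _ _)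
  · have hcb := le_of_not_ge hbc
    by_cases hac : a ≤ c
    · have hn : ncarry a b c = 1 := by
        simp [ncarry, bcnt_of_le hab, bcnt_of_lt (not_le.1 hbc), bcnt_of_le hac]
      rw [hn, genA, genA, genA, dif_pos hab, dif_neg hbc, dif_pos hac, ACyc.onePow_one,
        show homOfLE hab = homOfLE hac ≫ homOfLE hcb from Subsingleton.elim _ _,
        ← ACyc.ofHom_comp, Category.assoc, ACyc.comp_star_self]
    · have hca := le_of_not_ge hac
      have hn : ncarry a b c = 0 := by
        simp [ncarry, bcnt_of_le hab, bcnt_of_lt (not_le.1 hbc), bcnt_of_lt (not_le.1 hac)]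
      rw [hn, genA, genA, genA, dif_pos hab, dif_neg hbc, dif_neg hac]
      show _ = _ ≫ 𝟙 _
      rw [Category.comp_id,
        show homOfLE hcb = homOfLE hca ≫ homOfLE hab from Subsingleton.elim _ _,
        ACyc.star1_eq]
  · have hba := le_of_not_ge hab
    by_cases hac : a ≤ c
    · have hn : ncarry a b c = 1 := by
        simp [ncarry, bcnt_of_lt (not_le.1 hab), bcnt_of_le hbc, bcnt_of_le hac]
      rw [hn, genA, genA, genA, dif_neg hab, dif_pos hbc, dif_pos hac, ACyc.onePow_one,
        show homOfLE hbc = homOfLE hba ≫ homOfLE hac from Subsingleton.elim _ _,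
        ← ACyc.ofHom_comp, ← Category.assoc, ACyc.star_comp_self,
        ACyc.one_natural_ofHom]
    · have hca := le_of_not_ge hac
      have hn : ncarry a b c = 0 := by
        simp [ncarry, bcnt_of_lt (not_le.1 hab), bcnt_of_le hbc, bcnt_of_lt (not_le.1 hac)]
      rw [hn, genA, genA, genA, dif_neg hab, dif_pos hbc, dif_neg hac]
      show _ = _ ≫ 𝟙 _
      rw [Category.comp_id,
        show homOfLE hba = homOfLE hbc ≫ homOfLE hca from Subsingleton.elim _ _,
        ACyc.star2_eq]
  · have hba := le_of_not_ge hab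
    have hcb := le_of_not_ge hbc
    have hac : ¬ a ≤ c := not_le.2 ((not_le.1 hbc).trans_le hba)
    have hn : ncarry a b c = 1 := by
      simp [ncarry, bcnt_of_lt (not_le.1 hab), bcnt_of_lt (not_le.1 hbc),
        bcnt_of_lt (not_le.1 hac)]
    rw [hn, genA, genA, genA, dif_neg hab, dif_neg hbc, dif_neg hac, ACyc.onePow_one,
      ACyc.star_comp_star,
      show homOfLE (le_of_not_ge hac) = homOfLE hcb ≫ homOfLE hba from Subsingleton.elim _ _]

/-- The underlying map of the inverse functor `NCat A ⥤ ACyc A`. -/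
def NtoA_map (a b : A) (n : ℕ) : ACyc.obj a ⟶ ACyc.obj b :=
  genA a b ≫ ZPlus.onePow (ACyc.obj b) n

theorem NtoA_map_comp (x y z : A) (n m : ℕ) :
    NtoA_map x z (ncat_comp x y z n m) = NtoA_map x y n ≫ NtoA_map y z m := by
  unfold NtoA_map ncat_comp
  calc genA x z ≫ ZPlus.onePow (ACyc.obj z) (n + m + ncarry x y z)
      = (genA x z ≫ ZPlus.onePow (ACyc.obj z) (ncarry x y z)) ≫
          ZPlus.onePow (ACyc.obj z) n ≫ ZPlus.onePow (ACyc.obj z) m := by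
        rw [show n + m + ncarry x y z = ncarry x y z + (n + m) from by omega,
          ZPlus.onePow_add, ZPlus.onePow_add, Category.assoc]
    _ = (genA x y ≫ genA y z) ≫ ZPlus.onePow (ACyc.obj z) n ≫
          ZPlus.onePow (ACyc.obj z) m := by rw [genA_comp]
    _ = genA x y ≫ (genA y z ≫ ZPlus.onePow (ACyc.obj z) n) ≫
          ZPlus.onePow (ACyc.obj z) m := by simp only [Category.assoc]
    _ = genA x y ≫ (ZPlus.onePow (ACyc.obj y) n ≫ genA y z) ≫
          ZPlus.onePow (ACyc.obj z) m := by rw [ZPlus.onePow_natural]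
    _ = (genA x y ≫ ZPlus.onePow (ACyc.obj y) n) ≫ genA y z ≫
          ZPlus.onePow (ACyc.obj z) m := by simp only [Category.assoc]

/-- The inverse functor `NCat A ⥤ ACyc A`. -/
def NtoA (A : Type u) [LinearOrder A] : NCat A ⥤ ACyc A where
  obj x := ACyc.obj x.un
  map {x y} n := NtoA_map x.un y.un n
  map_id x := by
    show NtoA_map x.un x.un 0 = 𝟙 _
    rw [NtoA_map, genA_refl]
    show 𝟙 _ ≫ 𝟙 _ = 𝟙 _
    rw [Category.comp_id]
  map_comp {x y z} n m := by
    show NtoA_map x.un z.un (ncat_comp x.un y.un z.un n m) = _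
    rw [NtoA_map_comp x.un y.un z.un n m]

theorem NtoA_gen {a b : CycQuiver A} (e : a ⟶ b) :
    (NtoA A).map ((cycPre A).map e) =
      (CategoryTheory.Quotient.functor (cycRel A)).map (Quiver.Hom.toPath e) := by
  match e with
  | Sum.inl f =>
    show NtoA_map a.toA b.toA 0 = ACyc.ofHom f
    rw [NtoA_map]
    show genA a.toA b.toA ≫ 𝟙 _ = _
    rw [Category.comp_id, genA, dif_pos (show a.toA ≤ b.toA from leOfHom f)]
    exact congrArg _ (Subsingleton.elim _ _)
  | Sum.inr f =>
    show NtoA_map a.toA b.toA (if a.toA = b.toA then 1 else 0) = ACyc.star f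
    by_cases h : a.toA = b.toA
    · rw [if_pos h]
      cases h
      rw [NtoA_map, genA_refl, Category.id_comp, ACyc.onePow_one, ACyc.one]
      exact congrArg _ (Subsingleton.elim _ _)
    · rw [if_neg h, NtoA_map]
      show genA a.toA b.toA ≫ 𝟙 _ = _
      have hba := leOfHom f
      have : ¬ a.toA ≤ b.toA := fun h' => h (le_antisymm h' hba)
      rw [Category.comp_id, genA, dif_neg this]
      exact congrArg _ (Subsingleton.elim _ _)

theorem FA_NtoA : FA A ⋙ NtoA A = 𝟭 (ACyc A) := by
  apply CategoryTheory.Quotient.lift_unique'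
  have h1 : CategoryTheory.Quotient.functor (cycRel A) ⋙ FA A = Paths.lift (cycPre A) :=
    CategoryTheory.Quotient.lift_spec _ _ _
  erw [← Functor.assoc, h1]
  show Paths.lift (cycPre A) ⋙ NtoA A = CategoryTheory.Quotient.functor (cycRel A)
  fapply Paths.ext_functor
  · funext a
    rfl
  · intro a b e
    erw [eqToHom_refl, eqToHom_refl, Category.id_comp, Category.comp_id]
    show (NtoA A).map ((Paths.lift (cycPre A)).map (Quiver.Hom.toPath e)) = _
    rw [Paths.lift_toPath]
    exact NtoA_gen e

theorem NtoA_FA : NtoA A ⋙ FA A = 𝟭 (NCat A) := by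
  fapply CategoryTheory.Functor.ext
  · intro x
    rfl
  · intro x y n
    erw [eqToHom_refl, Category.id_comp, Category.comp_id]
    show (FA A).map (NtoA_map x.un y.un n) = n
    rw [NtoA_map, Functor.map_comp, (FA_isZ (A := A)).map_onePow]
    have h2 : (FA A).map (genA x.un y.un) = NCat.hom x.un y.un 0 := by
      rw [genA]
      by_cases h : x.un ≤ y.un
      · rw [dif_pos h, FA_map_ofHom]
      · rw [dif_neg h, FA_map_star,
          if_neg (fun h' : x.un = y.un => h (le_of_eq h'))]
    rw [h2]
    show ncat_comp x.un y.un y.un 0 (ZPlus.onePow (NCat.ofA y.un) n) = n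
    rw [NCat.onePow_eq]
    rw [ncat_comp, ncarry_right]
    omega

theorem FA_isZIso : IsZIso (FA A) :=
  ⟨FA_isZ, NtoA A, FA_NtoA, NtoA_FA⟩

end PartOne

/-! ### Extracting generators from the one- and two-object hypotheses -/

section Extraction

variable {C : Type u} [SmallCategory C] [ZPlus C]

/-- `g : x ⟶ y` freely generates each hom-set as a `Z₊`-torsor. -/
def IsGen {x y : C} (g : x ⟶ y) : Prop :=
  ∀ f : x ⟶ y, ∃! n : ℕ, f = g ≫ ZPlus.onePow y n

theorem zeroCyc_onePow (u : ZeroCyc) (n : ℕ) :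
    ZPlus.onePow u n = Multiplicative.ofAdd n := by
  induction n with
  | zero => rfl
  | succ n ih =>
    rw [ZPlus.onePow_succ, ih]
    show Multiplicative.ofAdd 1 * Multiplicative.ofAdd n = Multiplicative.ofAdd (n + 1)
    rw [← ofAdd_add]
    congr 1
    omega

theorem oneCyc_onePow (u : OneCyc) (n : ℕ) : ZPlus.onePow u n = (n : ℕ) := by
  induction n with
  | zero => rfl
  | succ n ih =>
    rw [ZPlus.onePow_succ, ih]
    show ocomp u u u n 1 = n + 1
    simp [ocomp]

theorem zeroCyc_unique (u : ZeroCyc) (g : u ⟶ u) (hg : g = 𝟙 u) (f : u ⟶ u) :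
    ∃! n : ℕ, f = g ≫ ZPlus.onePow u n := by
  refine ⟨Multiplicative.toAdd f, ?_, ?_⟩
  · show f = g ≫ ZPlus.onePow u (Multiplicative.toAdd f)
    rw [hg, Category.id_comp, zeroCyc_onePow]
    exact (ofAdd_toAdd (α := ℕ) f).symm
  · intro m hm
    have hm' : f = g ≫ ZPlus.onePow u m := hm
    rw [hg, Category.id_comp, zeroCyc_onePow] at hm'
    rw [hm']
    rfl

theorem oneCyc_unique {u v : OneCyc} (g : u ⟶ v) (hg : (g : ℕ) = (0 : ℕ)) (f : u ⟶ v) :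
    ∃! n : ℕ, f = g ≫ ZPlus.onePow v n := by
  have key : ∀ n : ℕ, (g ≫ ZPlus.onePow v n : ℕ) = n := by
    intro n
    show ocomp u v v g (ZPlus.onePow v n) = n
    rw [oneCyc_onePow]
    simp [ocomp, hg]
  refine ⟨(f : ℕ), (key (f : ℕ)).symm, ?_⟩
  intro m hm
  exact (hm.trans (key m)).symm

theorem isGen_of_map {T : Type*} {D : Type*} [Category T] [Category D] [ZPlus T] [ZPlus D]
    {Φ : T ⥤ D} (hZ : IsZFunctor Φ) (hiso : IsCatIso Φ) {a b : T} (g : a ⟶ b)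
    (hD : ∀ f' : Φ.obj a ⟶ Φ.obj b, ∃! n : ℕ, f' = Φ.map g ≫ ZPlus.onePow (Φ.obj b) n) :
    ∀ f : a ⟶ b, ∃! n : ℕ, f = g ≫ ZPlus.onePow b n := by
  intro f
  obtain ⟨n, hn, hu⟩ := hD (Φ.map f)
  refine ⟨n, ?_, fun m hm => ?_⟩
  · apply (hiso.map_bijective a b).1
    rw [Φ.map_comp, hZ.map_onePow]
    exact hn
  · exact hu m (by rw [hm, Φ.map_comp, hZ.map_onePow])

theorem onePow_fullSub {Z : C → Prop} (c : ObjectProperty.FullSubcategory Z) (n : ℕ) :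
    (ZPlus.onePow c n).hom = ZPlus.onePow c.obj n := by
  induction n with
  | zero => rfl
  | succ n ih =>
    show (ZPlus.onePow c n).hom ≫ ZPlus.one c.obj = ZPlus.onePow c.obj (n + 1)
    rw [ih, ZPlus.onePow_succ]

theorem isGen_fullSub {Z : C → Prop} {a b : ObjectProperty.FullSubcategory Z} {g : a ⟶ b}
    (h : ∀ f : a ⟶ b, ∃! n : ℕ, f = g ≫ ZPlus.onePow b n) :
    IsGen g.hom := by
  intro f
  obtain ⟨n, hn, hu⟩ := h ⟨f⟩
  have hc : ∀ m : ℕ, (ZPlus.onePow b m).hom = ZPlus.onePow b.obj m :=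
    fun m => onePow_fullSub b m
  refine ⟨n, ?_, fun m hm => ?_⟩
  · show f = _ ≫ ZPlus.onePow b.obj n
    rw [← hc n]
    exact congrArg InducedCategory.Hom.hom hn
  · have hm' : f = g.hom ≫ ZPlus.onePow b.obj m := hm
    rw [← hc m] at hm'
    exact hu m (InducedCategory.hom_ext hm') 

theorem isGen_id (h0 : OneObjHyp C) (x : C) : IsGen (𝟙 x) := by
  obtain ⟨Φ, hZ, hiso⟩ := h0 x
  let oX : ObjectProperty.FullSubcategory (fun c : C => c = x) := ⟨x, rfl⟩
  have hT := isGen_of_map hZ hiso (𝟙 oX)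
    (fun f' => zeroCyc_unique _ _ (Φ.map_id oX) f')
  exact isGen_fullSub hT

theorem gen_pair (h1 : TwoObjHyp C) {x y : C} (hxy : x ≠ y) :
    ∃ (g : x ⟶ y) (g' : y ⟶ x), IsGen g ∧ IsGen g' ∧
      g ≫ g' = ZPlus.one x ∧ g' ≫ g = ZPlus.one y := by
  obtain ⟨Φ, hZ, hiso⟩ := h1 x y hxy
  let oX : ObjectProperty.FullSubcategory (fun c : C => c = x ∨ c = y) := ⟨x, Or.inl rfl⟩
  let oY : ObjectProperty.FullSubcategory (fun c : C => c = x ∨ c = y) := ⟨y, Or.inr rfl⟩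
  obtain ⟨Φ', hl, hr⟩ := hiso
  have hne : Φ.obj oX ≠ Φ.obj oY := by
    intro h
    have e1 := Functor.congr_obj hl oX
    have e2 := Functor.congr_obj hl oY
    simp only [Functor.comp_obj, Functor.id_obj] at e1 e2
    rw [h] at e1
    exact hxy (congrArg ObjectProperty.FullSubcategory.obj (e1.symm.trans e2))
  have hiso' : IsCatIso Φ := ⟨Φ', hl, hr⟩
  obtain ⟨g, hg⟩ := (hiso'.map_bijective oX oY).2 (show Φ.obj oX ⟶ Φ.obj oY from (0 : ℕ))
  obtain ⟨g', hg'⟩ := (hiso'.map_bijective oY oX).2 (show Φ.obj oY ⟶ Φ.obj oX from (0 : ℕ))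
  refine ⟨g.hom, g'.hom,
    isGen_fullSub (isGen_of_map hZ hiso' g (fun f' => oneCyc_unique _ (by rw [hg]) f')),
    isGen_fullSub (isGen_of_map hZ hiso' g' (fun f' => oneCyc_unique _ (by rw [hg']) f')),
    ?_, ?_⟩
  · refine congrArg InducedCategory.Hom.hom (show g ≫ g' = ZPlus.one oX from ?_)
    apply (hiso'.map_bijective oX oX).1
    have hl1 : Φ.map (g ≫ g') = ZPlus.one (Φ.obj oX) := by
      rw [Φ.map_comp, hg, hg']
      show ocomp (Φ.obj oX) (Φ.obj oY) (Φ.obj oX) 0 0 = 1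
      simp [ocomp, hne, Ne.symm hne]
    exact hl1.trans (hZ oX).symm
  · refine congrArg InducedCategory.Hom.hom (show g' ≫ g = ZPlus.one oY from ?_)
    apply (hiso'.map_bijective oY oY).1
    have hl2 : Φ.map (g' ≫ g) = ZPlus.one (Φ.obj oY) := by
      rw [Φ.map_comp, hg', hg]
      show ocomp (Φ.obj oY) (Φ.obj oX) (Φ.obj oY) 0 0 = 1
      simp [ocomp, hne, Ne.symm hne]
    exact hl2.trans (hZ oY).symm

theorem IsGen.unique {x y : C} {g g' : x ⟶ y} (hg : IsGen g) (hg' : IsGen g') : g' = g := by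
  obtain ⟨n, hn, _⟩ := hg g'
  obtain ⟨m, hm, _⟩ := hg' g
  have h2 : g = g ≫ ZPlus.onePow y (n + m) := by
    conv_rhs => rw [ZPlus.onePow_add, ← Category.assoc, ← hn, ← hm]
  obtain ⟨k, hk1, hk2⟩ := hg g
  have e0 : (0 : ℕ) = k := hk2 0 (by
    show g = g ≫ 𝟙 _
    rw [Category.comp_id])
  have enm : n + m = k := hk2 (n + m) h2
  have hn0 : n = 0 := by omega
  rw [hn, hn0]
  show _ ≫ 𝟙 _ = g
  rw [Category.comp_id]

end Extraction

/-! ### The canonical generators `gm`, degrees, and the carry cocycle `Dg` -/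

section Gm

variable {C : Type u} [SmallCategory C] [ZPlus C]

open scoped Classical

theorem gen_exists (h1 : TwoObjHyp C) {x y : C} (h : x ≠ y) : ∃ g : x ⟶ y, IsGen g := by
  obtain ⟨g, _, hg, _⟩ := gen_pair h1 h
  exact ⟨g, hg⟩

/-- The canonical (torsor-minimal) generator `x ⟶ y`. -/
noncomputable def gm (h1 : TwoObjHyp C) (x y : C) : x ⟶ y :=
  if h : x = y then eqToHom h else (gen_exists h1 h).choose

theorem gm_refl (h1 : TwoObjHyp C) (x : C) : gm h1 x x = 𝟙 x := by
  rw [gm, dif_pos rfl, eqToHom_refl]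

theorem gm_isGen (h0 : OneObjHyp C) (h1 : TwoObjHyp C) (x y : C) : IsGen (gm h1 x y) := by
  by_cases h : x = y
  · subst h
    rw [gm_refl]
    exact isGen_id h0 x
  · rw [gm, dif_neg h]
    exact (gen_exists h1 h).choose_spec

theorem gm_comp_gm (h0 : OneObjHyp C) (h1 : TwoObjHyp C) {x y : C} (h : x ≠ y) :
    gm h1 x y ≫ gm h1 y x = ZPlus.one x := by
  obtain ⟨g, g', hg, hg', hc, _⟩ := gen_pair h1 h
  rw [show gm h1 x y = g from IsGen.unique hg (gm_isGen h0 h1 x y),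
    show gm h1 y x = g' from IsGen.unique hg' (gm_isGen h0 h1 y x)]
  exact hc

/-- The degree of a morphism relative to the canonical generator. -/
noncomputable def deg (h0 : OneObjHyp C) (h1 : TwoObjHyp C) {x y : C} (f : x ⟶ y) : ℕ :=
  (gm_isGen h0 h1 x y f).exists.choose

theorem deg_spec (h0 : OneObjHyp C) (h1 : TwoObjHyp C) {x y : C} (f : x ⟶ y) :
    f = gm h1 x y ≫ ZPlus.onePow y (deg h0 h1 f) :=
  (gm_isGen h0 h1 x y f).exists.choose_spec

theorem deg_eq (h0 : OneObjHyp C) (h1 : TwoObjHyp C) {x y : C} {f : x ⟶ y} {n : ℕ}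
    (h : f = gm h1 x y ≫ ZPlus.onePow y n) : deg h0 h1 f = n := by
  obtain ⟨k, hk, hu⟩ := gm_isGen h0 h1 x y f
  exact (hu _ (deg_spec h0 h1 f)).trans (hu n h).symm

/-- The carry of the pair of canonical generators `x ⟶ y ⟶ z`. -/
noncomputable def Dg (h0 : OneObjHyp C) (h1 : TwoObjHyp C) (x y z : C) : ℕ := deg h0 h1 (gm h1 x y ≫ gm h1 y z)

theorem Dg_spec (h0 : OneObjHyp C) (h1 : TwoObjHyp C) (x y z : C) :
    gm h1 x y ≫ gm h1 y z = gm h1 x z ≫ ZPlus.onePow z (Dg h0 h1 x y z) :=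
  deg_spec h0 h1 _

theorem Dg_left (h0 : OneObjHyp C) (h1 : TwoObjHyp C) (x z : C) : Dg h0 h1 x x z = 0 :=
  deg_eq h0 h1 (by rw [gm_refl, Category.id_comp]; exact (Category.comp_id _).symm)

theorem Dg_right (h0 : OneObjHyp C) (h1 : TwoObjHyp C) (x z : C) : Dg h0 h1 x z z = 0 :=
  deg_eq h0 h1 (by rw [gm_refl, Category.comp_id]; exact (Category.comp_id _).symm)

theorem Dg_loop (h0 : OneObjHyp C) (h1 : TwoObjHyp C) {x y : C} (h : x ≠ y) : Dg h0 h1 x y x = 1 :=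
  deg_eq h0 h1 (by
    rw [gm_comp_gm h0 h1 h, gm_refl, Category.id_comp, ZPlus.onePow_succ]
    show _ = 𝟙 _ ≫ _
    rw [Category.id_comp])

theorem Dg_cocycle (h0 : OneObjHyp C) (h1 : TwoObjHyp C) (x y z w : C) :
    Dg h0 h1 x y z + Dg h0 h1 x z w = Dg h0 h1 y z w + Dg h0 h1 x y w := by
  have hA : (gm h1 x y ≫ gm h1 y z) ≫ gm h1 z w
      = gm h1 x w ≫ ZPlus.onePow w (Dg h0 h1 x z w + Dg h0 h1 x y z) := by
    calc (gm h1 x y ≫ gm h1 y z) ≫ gm h1 z w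
        = (gm h1 x z ≫ ZPlus.onePow z (Dg h0 h1 x y z)) ≫ gm h1 z w := by
          rw [Dg_spec]
      _ = gm h1 x z ≫ gm h1 z w ≫ ZPlus.onePow w (Dg h0 h1 x y z) := by
          rw [Category.assoc, ZPlus.onePow_natural]
      _ = (gm h1 x w ≫ ZPlus.onePow w (Dg h0 h1 x z w)) ≫
            ZPlus.onePow w (Dg h0 h1 x y z) := by
          rw [← Category.assoc, ← Dg_spec]
      _ = gm h1 x w ≫ ZPlus.onePow w (Dg h0 h1 x z w + Dg h0 h1 x y z) := by
          rw [Category.assoc, ← ZPlus.onePow_add]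
  have hB : gm h1 x y ≫ gm h1 y z ≫ gm h1 z w
      = gm h1 x w ≫ ZPlus.onePow w (Dg h0 h1 x y w + Dg h0 h1 y z w) := by
    calc gm h1 x y ≫ gm h1 y z ≫ gm h1 z w
        = gm h1 x y ≫ gm h1 y w ≫ ZPlus.onePow w (Dg h0 h1 y z w) := by
          rw [Dg_spec]
      _ = (gm h1 x y ≫ gm h1 y w) ≫ ZPlus.onePow w (Dg h0 h1 y z w) := by
          rw [Category.assoc]
      _ = (gm h1 x w ≫ ZPlus.onePow w (Dg h0 h1 x y w)) ≫
            ZPlus.onePow w (Dg h0 h1 y z w) := by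
          rw [← Dg_spec]
      _ = gm h1 x w ≫ ZPlus.onePow w (Dg h0 h1 x y w + Dg h0 h1 y z w) := by
          rw [Category.assoc, ← ZPlus.onePow_add]
  have h1' := deg_eq h0 h1 ((Category.assoc _ _ _).symm.trans hA)
  have h2' := deg_eq h0 h1 hB
  omega

theorem Dg_rev (h0 : OneObjHyp C) (h1 : TwoObjHyp C) {x y z : C} (h : y ≠ z) : Dg h0 h1 x y z + Dg h0 h1 x z y = 1 := by
  have := Dg_cocycle h0 h1 x y z y
  rw [Dg_loop h0 h1 h, Dg_right] at this
  omega

end Gm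

/-! ### The linear order induced by the carry cocycle -/

section Order

variable {C : Type u} [SmallCategory C] [ZPlus C]

/-- The linear order on `C` obtained by cutting the cyclic order at `o`. -/
noncomputable def theOrder (h0 : OneObjHyp C) (h1 : TwoObjHyp C) (o : C) : LinearOrder C := by
  letI : DecidableRel (fun a b : C => a ≠ b ∧ Dg h0 h1 o a b = 0) := Classical.decRel _
  haveI : IsTrichotomous C (fun a b : C => a ≠ b ∧ Dg h0 h1 o a b = 0) := ⟨by
    intro a b hab hba
    by_cases h : a = b
    · exact h
    · have hs := Dg_rev h0 h1 (x := o) h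
      by_cases h2 : Dg h0 h1 o a b = 0
      · exact absurd ⟨h, h2⟩ hab
      · exact absurd ⟨Ne.symm h, by omega⟩ hba⟩
  haveI : IsIrrefl C (fun a b : C => a ≠ b ∧ Dg h0 h1 o a b = 0) := ⟨fun a h => h.1 rfl⟩
  haveI : IsTrans C (fun a b : C => a ≠ b ∧ Dg h0 h1 o a b = 0) := ⟨by
    rintro a b c ⟨hab, dab⟩ ⟨hbc, dbc⟩
    have hac : a ≠ c := by
      rintro rfl
      have := Dg_rev h0 h1 (x := o) hab
      omega
    have hco := Dg_cocycle h0 h1 o a b c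
    exact ⟨hac, by omega⟩⟩
  haveI : IsStrictOrder C (fun a b : C => a ≠ b ∧ Dg h0 h1 o a b = 0) := ⟨⟩
  haveI : IsStrictTotalOrder C (fun a b : C => a ≠ b ∧ Dg h0 h1 o a b = 0) := ⟨⟩
  exact linearOrderOfSTO (fun a b : C => a ≠ b ∧ Dg h0 h1 o a b = 0)

theorem Dg_o (h0 : OneObjHyp C) (h1 : TwoObjHyp C) (o : C) (u v : C) :
    Dg h0 h1 o u v = @bcnt C (theOrder h0 h1 o) v u := by
  letI := theOrder h0 h1 o
  have hlt : ∀ a b : C, a < b ↔ (a ≠ b ∧ Dg h0 h1 o a b = 0) := fun a b => Iff.rfl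
  by_cases h : u = v
  · subst h
    rw [Dg_right, bcnt_self]
  · have hrev := Dg_rev h0 h1 (x := o) h
    by_cases h2 : Dg h0 h1 o u v = 0
    · have hnv : ¬ (v < u) := by
        intro hv
        have h3 := (hlt v u).1 hv
        omega
      rw [h2]
      unfold bcnt
      rw [if_neg hnv]
    · have hv : v < u := (hlt v u).2 ⟨Ne.symm h, by omega⟩
      unfold bcnt
      rw [if_pos hv]
      omega

theorem Dg_carry (h0 : OneObjHyp C) (h1 : TwoObjHyp C) (o : C) (x y z : C) :
    Dg h0 h1 x y z = @ncarry C (theOrder h0 h1 o) x y z := by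
  have hco := Dg_cocycle h0 h1 o x y z
  rw [Dg_o h0 h1 o x y, Dg_o h0 h1 o y z, Dg_o h0 h1 o x z] at hco
  simp only [ncarry]
  omega

end Order

/-! ### The Z₊-isomorphism `NCat C ⥤ C` -/

section Psi

variable {C : Type u} [SmallCategory C] [ZPlus C] [LinearOrder C]

/-- The underlying map of the comparison functor `NCat C ⥤ C`. -/
noncomputable def psi_map (h1 : TwoObjHyp C) (a b : C) (n : ℕ) : a ⟶ b :=
  gm h1 a b ≫ ZPlus.onePow b n

theorem gm_pow_comp (h0 : OneObjHyp C) (h1 : TwoObjHyp C)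
    (hD : ∀ x y z : C, Dg h0 h1 x y z = ncarry x y z) (x y z : C) (n m : ℕ) :
    psi_map h1 x z (ncat_comp x y z n m) = psi_map h1 x y n ≫ psi_map h1 y z m := by
  unfold psi_map ncat_comp
  calc gm h1 x z ≫ ZPlus.onePow z (n + m + ncarry x y z)
      = (gm h1 x z ≫ ZPlus.onePow z (ncarry x y z)) ≫
          ZPlus.onePow z n ≫ ZPlus.onePow z m := by
        rw [show n + m + ncarry x y z = ncarry x y z + (n + m) from by omega,
          ZPlus.onePow_add, ZPlus.onePow_add, Category.assoc]
    _ = (gm h1 x y ≫ gm h1 y z) ≫ ZPlus.onePow z n ≫ ZPlus.onePow z m := by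
        rw [← hD x y z, ← Dg_spec]
    _ = gm h1 x y ≫ (gm h1 y z ≫ ZPlus.onePow z n) ≫ ZPlus.onePow z m := by
        simp only [Category.assoc]
    _ = gm h1 x y ≫ (ZPlus.onePow y n ≫ gm h1 y z) ≫ ZPlus.onePow z m := by
        rw [ZPlus.onePow_natural]
    _ = (gm h1 x y ≫ ZPlus.onePow y n) ≫ gm h1 y z ≫ ZPlus.onePow z m := by
        simp only [Category.assoc]

/-- The comparison functor `NCat C ⥤ C`. -/
noncomputable def psi (h0 : OneObjHyp C) (h1 : TwoObjHyp C)
    (hD : ∀ x y z : C, Dg h0 h1 x y z = ncarry x y z) : NCat C ⥤ C where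
  obj a := a.un
  map {a b} n := psi_map h1 a.un b.un n
  map_id a := by
    show psi_map h1 a.un a.un 0 = 𝟙 a.un
    rw [psi_map, gm_refl, Category.id_comp]
    rfl
  map_comp {a b c} n m := by
    show psi_map h1 a.un c.un (ncat_comp a.un b.un c.un n m) = _
    rw [gm_pow_comp h0 h1 hD]

theorem psi_isZ (h0 : OneObjHyp C) (h1 : TwoObjHyp C)
    (hD : ∀ x y z : C, Dg h0 h1 x y z = ncarry x y z) : IsZFunctor (psi h0 h1 hD) := by
  intro c
  show psi_map h1 c.un c.un 1 = ZPlus.one c.un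
  rw [psi_map, gm_refl, Category.id_comp, ZPlus.onePow_one]

/-- The inverse comparison functor `C ⥤ NCat C`. -/
noncomputable def psi' (h0 : OneObjHyp C) (h1 : TwoObjHyp C)
    (hD : ∀ x y z : C, Dg h0 h1 x y z = ncarry x y z) : C ⥤ NCat C where
  obj x := NCat.ofA x
  map {x y} f := NCat.hom x y (deg h0 h1 f)
  map_id x := by
    show NCat.hom x x (deg h0 h1 (𝟙 x)) = NCat.hom x x 0
    exact congrArg (NCat.hom x x) (deg_eq h0 h1 (by rw [gm_refl, Category.id_comp]; rfl))
  map_comp {x y z} f g := by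
    have hcomp : f ≫ g = gm h1 x z ≫ ZPlus.onePow z
        (ncat_comp x y z (deg h0 h1 f) (deg h0 h1 g)) := by
      conv_lhs => rw [deg_spec h0 h1 f, deg_spec h0 h1 g]
      exact (gm_pow_comp h0 h1 hD x y z _ _).symm
    exact congrArg (NCat.hom x z) (deg_eq h0 h1 hcomp)

theorem psi'_psi (h0 : OneObjHyp C) (h1 : TwoObjHyp C)
    (hD : ∀ x y z : C, Dg h0 h1 x y z = ncarry x y z) :
    psi' h0 h1 hD ⋙ psi h0 h1 hD = 𝟭 C := by
  fapply CategoryTheory.Functor.ext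
  · intro x
    rfl
  · intro x y f
    erw [eqToHom_refl, eqToHom_refl, Category.id_comp, Category.comp_id]
    show psi_map h1 x y (deg h0 h1 f) = f
    rw [psi_map]
    exact (deg_spec h0 h1 f).symm

theorem psi_psi' (h0 : OneObjHyp C) (h1 : TwoObjHyp C)
    (hD : ∀ x y z : C, Dg h0 h1 x y z = ncarry x y z) :
    psi h0 h1 hD ⋙ psi' h0 h1 hD = 𝟭 (NCat C) := by
  fapply CategoryTheory.Functor.ext
  · intro a
    rfl
  · intro a b n
    erw [eqToHom_refl, Category.id_comp, Category.comp_id]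
    show NCat.hom a.un b.un (deg h0 h1 (psi_map h1 a.un b.un n)) = NCat.hom a.un b.un n
    exact congrArg (NCat.hom a.un b.un) (deg_eq h0 h1 rfl)

theorem psi_isZIso (h0 : OneObjHyp C) (h1 : TwoObjHyp C)
    (hD : ∀ x y z : C, Dg h0 h1 x y z = ncarry x y z) : IsZIso (psi h0 h1 hD) :=
  ⟨psi_isZ h0 h1 hD, psi' h0 h1 hD, psi_psi' h0 h1 hD, psi'_psi h0 h1 hD⟩

end Psi

/-- Drinfeld, Proposition, (iii) ⟹ (i): a small Z₊-category in
which every one-object full subcategory is Z₊-isomorphic to `[0]_cyc` and every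
two-object full subcategory is Z₊-isomorphic to `[1]_cyc` is Z₊-isomorphic to
`A_cyc` for some linearly ordered set `A` (viewed as a category). -/
theorem zcat_is_acyc_of_linear_order (C : Type u) [SmallCategory C] [ZPlus C]
    (h0 : OneObjHyp C) (h1 : TwoObjHyp C) :
    ∃ (A : LinOrd.{u}) (Φ : ACyc A ⥤ C), IsZIso Φ := by
  obtain ⟨instL, hD⟩ : ∃ instL : LinearOrder C,
      ∀ x y z : C, Dg h0 h1 x y z = @ncarry C instL x y z := by
    rcases isEmpty_or_nonempty C with hE | hne
    · haveI := hE
      haveI : IsTrichotomous C (fun _ _ : C => False) := ⟨fun a => isEmptyElim a⟩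
      haveI : IsIrrefl C (fun _ _ : C => False) := ⟨fun _ h => h⟩
      haveI : IsTrans C (fun _ _ : C => False) := ⟨fun _ _ _ h => h.elim⟩
      haveI : IsStrictOrder C (fun _ _ : C => False) := ⟨⟩
      haveI : IsStrictTotalOrder C (fun _ _ : C => False) := ⟨⟩
      exact ⟨@linearOrderOfSTO C (fun _ _ => False) _ (Classical.decRel _),
        fun x => isEmptyElim x⟩
    · obtain ⟨o⟩ := hne
      exact ⟨theOrder h0 h1 o, fun x y z => Dg_carry h0 h1 o x y z⟩
  letI := instL
  exact ⟨LinOrd.of C, FA C ⋙ psi h0 h1 hD,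
    IsZIso.comp FA_isZIso (psi_isZIso h0 h1 hD)⟩
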